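/- The 1-Wasserstein distance between Laplace distributions Lap(α₁,β₁) and Lap(α₂,β₂) with β₁ ≠ β₂ equals |α₁ − α₂| + |β₁ − β₂|·exp(−|α₁ − α₂|/|β₁ − β₂|). -/

import Mathlib

open MeasureTheory Set Real

noncomputable def stdLaplaceCDF (x : ℝ) : ℝ :=
  if x < 0 then Real.exp x / 2 else 1 - Real.exp (-x) / 2

noncomputable def lapF (q : ℝ) : ℝ :=
  if q < 1/2 then Real.log (2*q) else -Real.log (2*(1-q))

lemma lapF_sym (q : ℝ) : lapF (1 - q) = -lapF q := by
  unfold lapF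
  rcases lt_trichotomy q (1/2) with h | h | h
  · rw [if_pos h, if_neg (by linarith)]
    ring_nf
  · subst h; norm_num
  · rw [if_pos (by linarith : (1:ℝ) - q < 1/2), if_neg (by push_neg; linarith)]
    ring_nf

lemma lap_char (Φinv : ℝ → ℝ) (hΦinv : ∀ q ∈ Ioo (0:ℝ) 1, stdLaplaceCDF (Φinv q) = q)
    (q : ℝ) (hq : q ∈ Ioo (0:ℝ) 1) : Φinv q = lapF q := by
  have h := hΦinv q hq
  unfold stdLaplaceCDF at h
  unfold lapF
  by_cases hx : Φinv q < 0
  · rw [if_pos hx] at h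
    have hq2 : q < 1/2 := by
      have := Real.exp_lt_one_iff.mpr hx
      linarith
    rw [if_pos hq2]
    have : 2 * q = Real.exp (Φinv q) := by linarith
    rw [this, Real.log_exp]
  · rw [if_neg hx] at h
    push_neg at hx
    have he : Real.exp (-Φinv q) ≤ 1 := Real.exp_le_one_iff.mpr (by linarith)
    have hq2 : ¬ (q < 1/2) := by push_neg; linarith
    rw [if_neg hq2]
    have : 2 * (1 - q) = Real.exp (-Φinv q) := by linarith
    rw [this, Real.log_exp]
    ring

lemma log_ii : IntervalIntegrable Real.log volume 0 1 := by
  rw [intervalIntegrable_iff_integrableOn_Ioc_of_le (by norm_num)]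
  have h : IntegrableOn (fun x : ℝ => -Real.log x) (Ioc (0:ℝ) 1) := by
    apply intervalIntegral.integrableOn_deriv_of_nonneg (g := fun x : ℝ => x - x * Real.log x)
    · exact (continuous_id.sub Real.continuous_mul_log).continuousOn
    · intro x hx
      have h2 : HasDerivAt (fun x : ℝ => x - x * Real.log x)
          (1 - (1 * Real.log x + x * x⁻¹)) x :=
        (hasDerivAt_id x).sub ((hasDerivAt_id x).mul (Real.hasDerivAt_log hx.1.ne'))
      convert h2 using 1
      field_simp [hx.1.ne']
      ring
    · intro x hx
      simpa using Real.log_nonpos hx.1.le hx.2.le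
  have h2 := h.neg
  have : (-fun x : ℝ => -Real.log x) = Real.log := by ext x; simp
  rwa [this] at h2

lemma log2q_ii : IntervalIntegrable (fun q : ℝ => Real.log (2*q)) volume 0 (1/2) := by
  simpa using log_ii.comp_mul_left (c := 2)

lemma log21q_ii : IntervalIntegrable (fun q : ℝ => Real.log (2*(1-q))) volume (1/2) 1 := by
  have := (log2q_ii.comp_sub_left 1).symm
  norm_num at this ⊢
  exact this

lemma hd_log2q (x : ℝ) (hx : x ≠ 0) :
    HasDerivAt (fun q : ℝ => Real.log (2*q)) x⁻¹ x := by
  have h2x : (2:ℝ)*x ≠ 0 := by simp [hx]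
  have := (Real.hasDerivAt_log h2x).comp x ((hasDerivAt_id x).const_mul 2)
  refine this.congr_deriv ?_
  field_simp

lemma hd_qlog2q (x : ℝ) (hx : x ≠ 0) :
    HasDerivAt (fun q : ℝ => q * Real.log (2*q)) (Real.log (2*x) + 1) x := by
  have := (hasDerivAt_id x).mul (hd_log2q x hx)
  refine this.congr_deriv ?_
  simp only [id]
  field_simp

lemma cont_qlog2q : Continuous (fun q : ℝ => q * Real.log (2*q)) := by
  have h : Continuous (fun q : ℝ => (2*q) * Real.log (2*q) / 2) :=
    (Real.continuous_mul_log.comp (continuous_const.mul continuous_id)).div_const 2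
  convert h using 1
  funext q; ring

lemma hd_log21q (x : ℝ) (hx : x ≠ 1) :
    HasDerivAt (fun q : ℝ => Real.log (2*(1-q))) (-(1-x)⁻¹) x := by
  have h1x : (1:ℝ) - x ≠ 0 := sub_ne_zero.mpr (Ne.symm hx)
  have h2x : (2:ℝ)*(1-x) ≠ 0 := by simp [h1x]
  have hi : HasDerivAt (fun q : ℝ => 2*(1-q)) (-2) x := by
    have := ((hasDerivAt_id x).const_sub 1).const_mul 2
    refine this.congr_deriv ?_; ring
  have := (Real.hasDerivAt_log h2x).comp x hi
  refine this.congr_deriv ?_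
  field_simp

lemma hd_1qlog21q (x : ℝ) (hx : x ≠ 1) :
    HasDerivAt (fun q : ℝ => (1-q) * Real.log (2*(1-q))) (-Real.log (2*(1-x)) - 1) x := by
  have h1x : (1:ℝ) - x ≠ 0 := sub_ne_zero.mpr (Ne.symm hx)
  have := (((hasDerivAt_id x).const_sub 1)).mul (hd_log21q x hx)
  refine this.congr_deriv ?_
  simp only [id]
  field_simp
  ring

lemma cont_1qlog21q : Continuous (fun q : ℝ => (1-q) * Real.log (2*(1-q))) := by
  have h : Continuous (fun q : ℝ => (2*(1-q)) * Real.log (2*(1-q)) / 2) :=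
    (Real.continuous_mul_log.comp
      (continuous_const.mul (continuous_const.sub continuous_id))).div_const 2
  convert h using 1
  funext q; ring

lemma lap_key (δ γ : ℝ) (hδ : 0 ≤ δ) (hγ : 0 < γ) :
    ∫ q in (0:ℝ)..1, |δ + γ * lapF q| = δ + γ * Real.exp (-(δ/γ)) := by
  set q0 : ℝ := Real.exp (-(δ/γ)) / 2 with hq0
  have hq0pos : 0 < q0 := by positivity
  have hq0le : q0 ≤ 1/2 := by
    have : Real.exp (-(δ/γ)) ≤ 1 := Real.exp_le_one_iff.mpr (by
      rw [neg_nonpos]; positivity)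
    rw [hq0]; linarith
  have hlogq0 : Real.log (2*q0) = -(δ/γ) := by
    rw [hq0]
    rw [show 2 * (Real.exp (-(δ/γ)) / 2) = Real.exp (-(δ/γ)) by ring, Real.log_exp]
  have hE1 : EqOn (fun q => |δ + γ * lapF q|) (fun q => |δ + γ * Real.log (2*q)|)
      (uIcc (0:ℝ) (1/2)) := by
    intro q hq
    rw [uIcc_of_le (by norm_num)] at hq
    simp only [lapF]
    rcases lt_or_eq_of_le hq.2 with h | h
    · rw [if_pos h]
    · rw [h, if_neg (lt_irrefl _)]
      norm_num
  have hE2 : EqOn (fun q => |δ + γ * lapF q|) (fun q => δ - γ * Real.log (2*(1-q)))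
      (uIcc (1/2:ℝ) 1) := by
    intro q hq
    rw [uIcc_of_le (by norm_num)] at hq
    have habs : |δ + γ * -Real.log (2*(1-q))| = δ - γ * Real.log (2*(1-q)) := by
      rw [show δ + γ * -Real.log (2*(1-q)) = δ - γ * Real.log (2*(1-q)) by ring]
      apply abs_of_nonneg
      have hl : Real.log (2*(1-q)) ≤ 0 :=
        Real.log_nonpos (by linarith [hq.2]) (by linarith [hq.1])
      nlinarith
    simp only [lapF]
    rw [if_neg (by push_neg; linarith [hq.1])]
    exact habs
  have ii1 : IntervalIntegrable (fun q => |δ + γ * Real.log (2*q)|) volume 0 (1/2) :=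
    (intervalIntegrable_const.add (log2q_ii.const_mul γ)).abs
  have ii2 : IntervalIntegrable (fun q => δ - γ * Real.log (2*(1-q))) volume (1/2) 1 :=
    intervalIntegrable_const.sub (log21q_ii.const_mul γ)
  have iiF1 : IntervalIntegrable (fun q => |δ + γ * lapF q|) volume 0 (1/2) := by
    rw [intervalIntegrable_iff_integrableOn_Ioc_of_le (by norm_num)] at ii1 ⊢
    exact ii1.congr_fun (fun q hq => (hE1 (by
      rw [uIcc_of_le (by norm_num)]; exact Ioc_subset_Icc_self hq)).symm) measurableSet_Ioc
  have iiF2 : IntervalIntegrable (fun q => |δ + γ * lapF q|) volume (1/2) 1 := by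
    rw [intervalIntegrable_iff_integrableOn_Ioc_of_le (by norm_num)] at ii2 ⊢
    exact ii2.congr_fun (fun q hq => (hE2 (by
      rw [uIcc_of_le (by norm_num)]; exact Ioc_subset_Icc_self hq)).symm) measurableSet_Ioc
  rw [← intervalIntegral.integral_add_adjacent_intervals iiF1 iiF2]
  rw [intervalIntegral.integral_congr hE1, intervalIntegral.integral_congr hE2]
  have hsub : uIcc (0:ℝ) q0 ⊆ uIcc (0:ℝ) (1/2) := by
    rw [uIcc_of_le hq0pos.le, uIcc_of_le (by norm_num)]
    exact Icc_subset_Icc le_rfl hq0le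
  have hsub2 : uIcc q0 (1/2:ℝ) ⊆ uIcc (0:ℝ) (1/2) := by
    rw [uIcc_of_le hq0le, uIcc_of_le (by norm_num)]
    exact Icc_subset_Icc hq0pos.le le_rfl
  rw [← intervalIntegral.integral_add_adjacent_intervals (ii1.mono_set hsub) (ii1.mono_set hsub2)]
  have hP1 : ∫ q in (0:ℝ)..q0, |δ + γ * Real.log (2*q)| = γ * q0 := by
    have hcong : ∫ q in (0:ℝ)..q0, |δ + γ * Real.log (2*q)|
        = ∫ q in (0:ℝ)..q0, -(δ + γ * Real.log (2*q)) := by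
      apply intervalIntegral.integral_congr_ae
      filter_upwards with q hq
      rw [uIoc_of_le hq0pos.le] at hq
      have hlog : Real.log (2*q) ≤ Real.log (2*q0) :=
        Real.log_le_log (by linarith [hq.1]) (by linarith [hq.2])
      rw [hlogq0] at hlog
      have : δ + γ * Real.log (2*q) ≤ 0 := by
        have := mul_le_mul_of_nonneg_left hlog hγ.le
        rw [mul_neg, mul_div_cancel₀ _ hγ.ne'] at this
        linarith
      exact abs_of_nonpos this
    rw [hcong, intervalIntegral.integral_neg]
    have hcont : ContinuousOn (fun q : ℝ => δ*q + γ*(q * Real.log (2*q) - q)) (Icc 0 q0) :=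
      (((continuous_const.mul continuous_id).add
        (continuous_const.mul (cont_qlog2q.sub continuous_id)))).continuousOn
    have hderiv : ∀ x ∈ Ioo (0:ℝ) q0, HasDerivAt (fun q : ℝ => δ*q + γ*(q * Real.log (2*q) - q))
        (δ + γ * Real.log (2*x)) x := by
      intro x hx
      have := ((hasDerivAt_id x).const_mul δ).add
        (((hd_qlog2q x hx.1.ne').sub (hasDerivAt_id x)).const_mul γ)
      refine this.congr_deriv ?_
      simp
      try ring
    have hint : IntervalIntegrable (fun q : ℝ => δ + γ * Real.log (2*q)) volume 0 q0 :=
      (intervalIntegrable_const.add (log2q_ii.const_mul γ)).mono_set hsub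
    have hftc := intervalIntegral.integral_eq_sub_of_hasDerivAt_of_le hq0pos.le hcont hderiv hint
    rw [hftc]
    rw [hlogq0]
    have : (2:ℝ) * 0 = 0 := by ring
    rw [this, Real.log_zero]
    field_simp
    ring
  have hP2 : ∫ q in q0..(1/2:ℝ), |δ + γ * Real.log (2*q)|
      = δ/2 - γ/2 + γ * q0 := by
    have hcong : ∫ q in q0..(1/2:ℝ), |δ + γ * Real.log (2*q)|
        = ∫ q in q0..(1/2:ℝ), (δ + γ * Real.log (2*q)) := by
      apply intervalIntegral.integral_congr_ae
      filter_upwards with q hq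
      rw [uIoc_of_le hq0le] at hq
      have hlog : Real.log (2*q0) ≤ Real.log (2*q) :=
        Real.log_le_log (by linarith [hq0pos]) (by linarith [hq.1])
      rw [hlogq0] at hlog
      have : 0 ≤ δ + γ * Real.log (2*q) := by
        have := mul_le_mul_of_nonneg_left hlog hγ.le
        rw [mul_neg, mul_div_cancel₀ _ hγ.ne'] at this
        linarith
      exact abs_of_nonneg this
    rw [hcong]
    have hcont : ContinuousOn (fun q : ℝ => δ*q + γ*(q * Real.log (2*q) - q)) (Icc q0 (1/2)) :=
      (((continuous_const.mul continuous_id).add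
        (continuous_const.mul (cont_qlog2q.sub continuous_id)))).continuousOn
    have hderiv : ∀ x ∈ Ioo q0 (1/2:ℝ), HasDerivAt (fun q : ℝ => δ*q + γ*(q * Real.log (2*q) - q))
        (δ + γ * Real.log (2*x)) x := by
      intro x hx
      have hxne : x ≠ 0 := ne_of_gt (lt_trans hq0pos hx.1)
      have := ((hasDerivAt_id x).const_mul δ).add
        (((hd_qlog2q x hxne).sub (hasDerivAt_id x)).const_mul γ)
      refine this.congr_deriv ?_
      simp
      try ring
    have hint : IntervalIntegrable (fun q : ℝ => δ + γ * Real.log (2*q)) volume q0 (1/2) :=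
      (intervalIntegrable_const.add (log2q_ii.const_mul γ)).mono_set hsub2
    have hftc := intervalIntegral.integral_eq_sub_of_hasDerivAt_of_le hq0le hcont hderiv hint
    rw [hftc]
    rw [hlogq0]
    rw [show (2:ℝ) * (1/2) = 1 by norm_num, Real.log_one]
    field_simp
    ring
  have hP3 : ∫ q in (1/2:ℝ)..1, (δ - γ * Real.log (2*(1-q))) = δ/2 + γ/2 := by
    have hcont : ContinuousOn (fun q : ℝ => δ*q + γ*((1-q) * Real.log (2*(1-q)) + q))
        (Icc (1/2:ℝ) 1) :=
      (((continuous_const.mul continuous_id).add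
        (continuous_const.mul (cont_1qlog21q.add continuous_id)))).continuousOn
    have hderiv : ∀ x ∈ Ioo (1/2:ℝ) 1,
        HasDerivAt (fun q : ℝ => δ*q + γ*((1-q) * Real.log (2*(1-q)) + q))
        (δ - γ * Real.log (2*(1-x))) x := by
      intro x hx
      have := ((hasDerivAt_id x).const_mul δ).add
        (((hd_1qlog21q x hx.2.ne).add (hasDerivAt_id x)).const_mul γ)
      refine this.congr_deriv ?_
      simp
      try ring
    have hint : IntervalIntegrable (fun q : ℝ => δ - γ * Real.log (2*(1-q))) volume (1/2) 1 :=
      intervalIntegrable_const.sub (log21q_ii.const_mul γ)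
    have hftc := intervalIntegral.integral_eq_sub_of_hasDerivAt_of_le
      (by norm_num : (1/2:ℝ) ≤ 1) hcont hderiv hint
    rw [hftc]
    rw [show (2:ℝ) * (1 - 1) = 0 by ring, Real.log_zero,
      show (2:ℝ) * (1 - 1/2) = 1 by norm_num, Real.log_one]
    ring
  rw [hP1, hP2, hP3]
  rw [hq0]
  ring

lemma lap_flipγ (a b : ℝ) : ∫ q in (0:ℝ)..1, |a + b * lapF q|
    = ∫ q in (0:ℝ)..1, |a + (-b) * lapF q| := by
  have h := intervalIntegral.integral_comp_sub_left (a := (0:ℝ)) (b := (1:ℝ))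
    (fun q => |a + b * lapF q|) 1
  norm_num at h
  rw [← h]
  apply intervalIntegral.integral_congr
  intro q _
  simp only [lapF_sym]
  congr 1
  ring

lemma lap_flipδ (a b : ℝ) : ∫ q in (0:ℝ)..1, |a + b * lapF q|
    = ∫ q in (0:ℝ)..1, |(-a) + (-b) * lapF q| := by
  have : (fun q => |a + b * lapF q|) = fun q => |(-a) + (-b) * lapF q| := by
    funext q
    rw [← abs_neg (a + b * lapF q)]
    congr 1
    ring
  rw [this]

lemma lap_key' (δ γ : ℝ) (hγ : γ ≠ 0) :
    ∫ q in (0:ℝ)..1, |δ + γ * lapF q| = |δ| + |γ| * Real.exp (-(|δ|/|γ|)) := by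
  rcases le_or_gt 0 δ with hδ | hδ <;> rcases hγ.lt_or_gt with hg | hg
  · rw [lap_flipγ, lap_key δ (-γ) hδ (by linarith), abs_of_nonneg hδ, abs_of_neg hg]
  · rw [lap_key δ γ hδ hg, abs_of_nonneg hδ, abs_of_pos hg]
  · rw [lap_flipδ, lap_key (-δ) (-γ) (by linarith) (by linarith), abs_of_neg hδ, abs_of_neg hg]
  · rw [lap_flipδ, lap_flipγ, neg_neg, lap_key (-δ) γ (by linarith) hg,
      abs_of_neg hδ, abs_of_pos hg]

theorem wasserstein1_laplace_exact
    (Φinv : ℝ → ℝ) (hΦinv : ∀ q ∈ Ioo (0:ℝ) 1, stdLaplaceCDF (Φinv q) = q)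
    (α₁ α₂ β₁ β₂ : ℝ) (hβ₁ : 0 < β₁) (hβ₂ : 0 < β₂) (hne : β₁ ≠ β₂) :
    ∫ q in Ioo (0:ℝ) 1, |(α₁ + β₁ * Φinv q) - (α₂ + β₂ * Φinv q)| =
      |α₁ - α₂| + |β₁ - β₂| * Real.exp (-|α₁ - α₂| / |β₁ - β₂|) := by
  have hγ : β₁ - β₂ ≠ 0 := sub_ne_zero.mpr hne
  have h1 : ∫ q in Ioo (0:ℝ) 1, |(α₁ + β₁ * Φinv q) - (α₂ + β₂ * Φinv q)|
      = ∫ q in Ioo (0:ℝ) 1, |(α₁ - α₂) + (β₁ - β₂) * lapF q| := by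
    apply setIntegral_congr_fun measurableSet_Ioo
    intro q hq
    dsimp only
    rw [lap_char Φinv hΦinv q hq]
    congr 1
    ring
  rw [h1]
  rw [← MeasureTheory.integral_Ioc_eq_integral_Ioo,
    ← intervalIntegral.integral_of_le (by norm_num : (0:ℝ) ≤ 1)]
  rw [lap_key' _ _ hγ, neg_div]
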